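/- Consider a bipartite graph on worker types T_L and employer types T_E induced by a matching M of agents (with n_t agents of each type t): there is an edge between types k ∈ T_L and q ∈ T_E iff some agent of type k is matched to some agent of type q. Mark a type-vertex iff at least one agent of that type is unmatched under M. If for every pair of subsets S ⊆ T_L, S' ⊆ T_E one has Σ_{t∈S} n_t ≠ Σ_{t∈S'} n_t, then every connected component of this type-adjacency graph contains a marked vertex. -/

import Mathlib

/-- The type-adjacency relation induced by a matching `M`: worker type `k` and employer
type `q` are adjacent iff some worker of type `k` is matched to some employer of type `q`. -/
def adjType {W E TL TE : Type*} (τw : W → TL) (τe : E → TE) (M : W → Option E) :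
    (TL ⊕ TE) → (TL ⊕ TE) → Prop
  | Sum.inl k, Sum.inr q => ∃ w e, τw w = k ∧ τe e = q ∧ M w = some e
  | Sum.inr q, Sum.inl k => ∃ w e, τw w = k ∧ τe e = q ∧ M w = some e
  | _, _ => False

/-- A type is marked iff some agent of that type is unmatched under `M`. -/
def markedType {W E TL TE : Type*} (τw : W → TL) (τe : E → TE) (M : W → Option E) :
    (TL ⊕ TE) → Prop
  | Sum.inl k => ∃ w, τw w = k ∧ M w = none
  | Sum.inr q => ∃ e, τe e = q ∧ ∀ w, M w ≠ some e

/-- If no (nonempty) submarket of types is balanced, then every connected component of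
the type-adjacency graph of a matching contains a marked vertex. -/
theorem stmt12 {W E TL TE : Type*} [Fintype W] [Fintype E] [Fintype TL] [Fintype TE]
    [DecidableEq TL] [DecidableEq TE]
    (τw : W → TL) (τe : E → TE) (M : W → Option E)
    (hinj : ∀ w w' e, M w = some e → M w' = some e → w = w')
    (hbal : ∀ (S : Finset TL) (S' : Finset TE), S.Nonempty ∨ S'.Nonempty →
      ∑ t ∈ S, (Finset.univ.filter fun w => τw w = t).card ≠
        ∑ t ∈ S', (Finset.univ.filter fun e => τe e = t).card) :
    ∀ v : TL ⊕ TE, ∃ u : TL ⊕ TE, markedType τw τe M u ∧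
      Relation.ReflTransGen (adjType τw τe M) v u := by
  classical
  intro v
  by_contra hcon
  push_neg at hcon
  set R : (TL ⊕ TE) → Prop := Relation.ReflTransGen (adjType τw τe M) v with hR
  set S : Finset TL := Finset.univ.filter (fun k => R (Sum.inl k)) with hS
  set S' : Finset TE := Finset.univ.filter (fun q => R (Sum.inr q)) with hS'
  have hwm : ∀ w : W, τw w ∈ S → ∃ e, M w = some e ∧ τe e ∈ S' := by
    intro w hw
    have hRw : R (Sum.inl (τw w)) := by simpa [hS] using hw
    cases hMe : M w with
    | none =>
      exact absurd hRw (hcon (Sum.inl (τw w)) ⟨w, rfl, hMe⟩)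
    | some e =>
      refine ⟨e, rfl, ?_⟩
      have hadj : adjType τw τe M (Sum.inl (τw w)) (Sum.inr (τe e)) :=
        ⟨w, e, rfl, rfl, hMe⟩
      simpa [hS'] using hRw.tail hadj
  have hem : ∀ e : E, τe e ∈ S' → ∃ w, M w = some e ∧ τw w ∈ S := by
    intro e he
    have hRe : R (Sum.inr (τe e)) := by simpa [hS'] using he
    by_cases hex : ∃ w, M w = some e
    · obtain ⟨w, hw⟩ := hex
      refine ⟨w, hw, ?_⟩
      have hadj : adjType τw τe M (Sum.inr (τe e)) (Sum.inl (τw w)) :=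
        ⟨w, e, rfl, rfl, hw⟩
      simpa [hS] using hRe.tail hadj
    · push_neg at hex
      exact absurd hRe (hcon (Sum.inr (τe e)) ⟨e, rfl, hex⟩)
  have hne : S.Nonempty ∨ S'.Nonempty := by
    cases v with
    | inl k => exact Or.inl ⟨k, Finset.mem_filter.mpr ⟨Finset.mem_univ _, Relation.ReflTransGen.refl⟩⟩
    | inr q => exact Or.inr ⟨q, Finset.mem_filter.mpr ⟨Finset.mem_univ _, Relation.ReflTransGen.refl⟩⟩
  have key : (Finset.univ.filter fun w => τw w ∈ S).card
      = (Finset.univ.filter fun e => τe e ∈ S').card := by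
    apply Finset.card_bij (fun w hw => Classical.choose (hwm w (Finset.mem_filter.mp hw).2))
    · intro w hw
      obtain ⟨h1, h2⟩ := Classical.choose_spec (hwm w (Finset.mem_filter.mp hw).2)
      simpa using h2
    · intro w1 h1 w2 h2 heq
      have s1 := (Classical.choose_spec (hwm w1 (Finset.mem_filter.mp h1).2)).1
      have s2 := (Classical.choose_spec (hwm w2 (Finset.mem_filter.mp h2).2)).1
      exact hinj _ _ _ s1 (heq ▸ s2)
    · intro e he
      obtain ⟨w, hw1, hw2⟩ := hem e (Finset.mem_filter.mp he).2
      have hwmem : w ∈ Finset.univ.filter fun w => τw w ∈ S := by simp [hw2]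
      refine ⟨w, hwmem, ?_⟩
      have s1 := (Classical.choose_spec (hwm w (Finset.mem_filter.mp hwmem).2)).1
      exact Option.some.inj (s1.symm.trans hw1)
  have sumL : ∑ t ∈ S, (Finset.univ.filter fun w => τw w = t).card
      = (Finset.univ.filter fun w => τw w ∈ S).card := by
    rw [Finset.card_eq_sum_card_fiberwise (s := Finset.univ.filter fun w => τw w ∈ S) (t := S) (f := τw)
      (fun w hw => (Finset.mem_filter.mp hw).2)]
    apply Finset.sum_congr rfl
    intro t ht
    congr 1
    ext w
    simp only [Finset.mem_filter, Finset.mem_univ, true_and, Finset.filter_filter]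
    constructor
    · intro h; exact ⟨h ▸ ht, h⟩
    · intro h; exact h.2
  have sumR : ∑ t ∈ S', (Finset.univ.filter fun e => τe e = t).card
      = (Finset.univ.filter fun e => τe e ∈ S').card := by
    rw [Finset.card_eq_sum_card_fiberwise (s := Finset.univ.filter fun e => τe e ∈ S') (t := S') (f := τe)
      (fun e he => (Finset.mem_filter.mp he).2)]
    apply Finset.sum_congr rfl
    intro t ht
    congr 1
    ext e
    simp only [Finset.mem_filter, Finset.mem_univ, true_and, Finset.filter_filter]
    constructor
    · intro h; exact ⟨h ▸ ht, h⟩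
    · intro h; exact h.2
  exact hbal S S' hne (by rw [sumL, sumR, key])
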